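/- Let p be a prime and G a finite subgroup of GL_2(F_p) acting irreducibly on V = F_p^2 (the standard representation). If p divides the order of G, then G contains SL_2(F_p). -/

import Mathlib

open Matrix

namespace SL2Aux

variable {p : ℕ} [Fact p.Prime]

abbrev M2 (p : ℕ) := Matrix (Fin 2) (Fin 2) (ZMod p)

def Tu (a : ZMod p) : M2 p := !![1, a; 0, 1]
def Tl (a : ZMod p) : M2 p := !![1, 0; a, 1]

lemma Tu_mul (a b : ZMod p) : Tu a * Tu b = Tu (a + b) := by
  ext i j; fin_cases i <;> fin_cases j <;>
    simp [Tu, Matrix.mul_apply, Fin.sum_univ_two] <;> ring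

lemma Tl_mul (a b : ZMod p) : Tl a * Tl b = Tl (a + b) := by
  ext i j; fin_cases i <;> fin_cases j <;>
    simp [Tl, Matrix.mul_apply, Fin.sum_univ_two] <;> ring

lemma Tu_zero : (Tu (0 : ZMod p)) = 1 := by
  ext i j; fin_cases i <;> fin_cases j <;> simp [Tu]
lemma Tl_zero : (Tl (0 : ZMod p)) = 1 := by
  ext i j; fin_cases i <;> fin_cases j <;> simp [Tl]

lemma Tu_pow (a : ZMod p) (n : ℕ) : (Tu a) ^ n = Tu ((n : ZMod p) * a) := by
  induction n with
  | zero => simp [pow_zero, Tu_zero]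
  | succ n ih => rw [pow_succ, ih, Tu_mul]; push_cast; ring_nf

lemma Tl_pow (a : ZMod p) (n : ℕ) : (Tl a) ^ n = Tl ((n : ZMod p) * a) := by
  induction n with
  | zero => simp [pow_zero, Tl_zero]
  | succ n ih => rw [pow_succ, ih, Tl_mul]; push_cast; ring_nf

lemma para (v w : Fin 2 → ZMod p) (hv : v ≠ 0) (h : v 0 * w 1 = v 1 * w 0) :
    ∃ t : ZMod p, w = t • v := by
  obtain ⟨i, hi⟩ := Function.ne_iff.mp hv
  fin_cases i
  · have hi0 : v 0 ≠ 0 := by simpa using hi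
    refine ⟨w 0 / v 0, ?_⟩
    funext j; fin_cases j
    · simp; field_simp
    · simp; field_simp; linear_combination h
  · have hi1 : v 1 ≠ 0 := by simpa using hi
    refine ⟨w 1 / v 1, ?_⟩
    funext j; fin_cases j
    · simp; field_simp; linear_combination -h
    · simp; field_simp

lemma cross (A : M2 p) (x y : Fin 2 → ZMod p) :
    (A.mulVec x) 0 * (A.mulVec y) 1 - (A.mulVec x) 1 * (A.mulVec y) 0
      = A.det * (x 0 * y 1 - x 1 * y 0) := by
  simp [Matrix.mulVec, dotProduct, Fin.sum_univ_two, Matrix.det_fin_two]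
  ring

lemma ch2 (A : M2 p) : A * A - A.trace • A + A.det • 1 = 0 := by
  ext i j; fin_cases i <;> fin_cases j <;>
    simp [Matrix.mul_apply, Fin.sum_univ_two, Matrix.det_fin_two, Matrix.trace_fin_two,
      Matrix.one_apply] <;> ring

lemma colMul (A : M2 p) (v w : Fin 2 → ZMod p) :
    A * !![v 0, w 0; v 1, w 1]
      = !![A.mulVec v 0, A.mulVec w 0; A.mulVec v 1, A.mulVec w 1] := by
  ext i j; fin_cases i <;> fin_cases j <;>
    simp [Matrix.mul_apply, Matrix.mulVec, dotProduct, Fin.sum_univ_two]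

lemma decomp (s : M2 p) (hdet : s.det = 1) (hc : s 1 0 ≠ 0) :
    Tu ((s 0 0 - 1) / s 1 0) * Tl (s 1 0) * Tu ((s 1 1 - 1) / s 1 0) = s := by
  have hd : s 0 0 * s 1 1 - s 0 1 * s 1 0 = 1 := by
    rw [← Matrix.det_fin_two]; exact hdet
  ext i j; fin_cases i <;> fin_cases j <;>
    simp [Tu, Tl, Matrix.mul_apply, Fin.sum_univ_two] <;>
    field_simp
  · ring
  · linear_combination hd
  · ring

lemma gen_aux (K : Subgroup (GL (Fin 2) (ZMod p)))
    (hu : ∀ a : ZMod p, ∃ k ∈ K, (k : M2 p) = Tu a)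
    (hl : ∀ a : ZMod p, ∃ k ∈ K, (k : M2 p) = Tl a)
    (s : M2 p) (hdet : s.det = 1) (hc : s 1 0 ≠ 0) :
    ∃ k ∈ K, (k : M2 p) = s := by
  obtain ⟨k1, hk1, e1⟩ := hu ((s 0 0 - 1) / s 1 0)
  obtain ⟨k2, hk2, e2⟩ := hl (s 1 0)
  obtain ⟨k3, hk3, e3⟩ := hu ((s 1 1 - 1) / s 1 0)
  refine ⟨k1 * k2 * k3, mul_mem (mul_mem hk1 hk2) hk3, ?_⟩
  push_cast [Units.val_mul]
  rw [e1, e2, e3]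
  exact decomp s hdet hc

lemma gen (K : Subgroup (GL (Fin 2) (ZMod p)))
    (hu : ∀ a : ZMod p, ∃ k ∈ K, (k : M2 p) = Tu a)
    (hl : ∀ a : ZMod p, ∃ k ∈ K, (k : M2 p) = Tl a)
    (s : M2 p) (hdet : s.det = 1) :
    ∃ k ∈ K, (k : M2 p) = s := by
  by_cases hc : s 1 0 ≠ 0
  · exact gen_aux K hu hl s hdet hc
  · push_neg at hc
    have hdet' : (s * Tl 1).det = 1 := by
      rw [Matrix.det_mul]; simp [Tl, hdet]
    have hc' : (s * Tl (1 : ZMod p) : M2 p) 1 0 ≠ 0 := by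
      have h11 : s 1 1 ≠ 0 := by
        intro h0
        rw [Matrix.det_fin_two, h0, hc] at hdet
        simp at hdet
      simpa [Tl, Matrix.mul_apply, Fin.sum_univ_two, hc] using h11
    obtain ⟨k, hk, ek⟩ := gen_aux K hu hl (s * Tl 1) hdet' hc'
    obtain ⟨k2, hk2, e2⟩ := hl (-1)
    refine ⟨k * k2, mul_mem hk hk2, ?_⟩
    push_cast [Units.val_mul]
    rw [ek, e2, mul_assoc, Tl_mul]
    norm_num [Tl_zero]

lemma allTu (K : Subgroup (GL (Fin 2) (ZMod p))) (c : ZMod p) (hc : c ≠ 0)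
    (h : ∃ k ∈ K, (k : M2 p) = Tu c) : ∀ a : ZMod p, ∃ k ∈ K, (k : M2 p) = Tu a := by
  obtain ⟨k, hk, e⟩ := h
  intro a
  refine ⟨k ^ (a / c).val, pow_mem hk _, ?_⟩
  rw [Units.val_pow_eq_pow_val, e, Tu_pow, ZMod.natCast_rightInverse (a / c)]
  congr 1
  field_simp

lemma allTl (K : Subgroup (GL (Fin 2) (ZMod p))) (c : ZMod p) (hc : c ≠ 0)
    (h : ∃ k ∈ K, (k : M2 p) = Tl c) : ∀ a : ZMod p, ∃ k ∈ K, (k : M2 p) = Tl a := by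
  obtain ⟨k, hk, e⟩ := h
  intro a
  refine ⟨k ^ (a / c).val, pow_mem hk _, ?_⟩
  rw [Units.val_pow_eq_pow_val, e, Tl_pow, ZMod.natCast_rightInverse (a / c)]
  congr 1
  field_simp

end SL2Aux

open Matrix SL2Aux in
/-- A subgroup `G` of `GL₂(𝔽_p)` acting irreducibly on the standard representation `𝔽_p²`
whose order is divisible by `p` contains `SL₂(𝔽_p)`. -/
theorem subgroup_irreducible_contains_SL2 (p : ℕ) [Fact p.Prime]
    (G : Subgroup (GL (Fin 2) (ZMod p)))
    (hirr : ∀ W : Submodule (ZMod p) (Fin 2 → ZMod p),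
      (∀ g ∈ G, ∀ v ∈ W, (g : Matrix (Fin 2) (Fin 2) (ZMod p)).mulVec v ∈ W) →
      W = ⊥ ∨ W = ⊤)
    (hdvd : p ∣ Nat.card G) :
    ∀ s : Matrix.SpecialLinearGroup (Fin 2) (ZMod p),
      Matrix.SpecialLinearGroup.toGL s ∈ G := by
  have hp : p.Prime := Fact.out
  -- Cauchy: an element of order p
  haveI : Fintype ↥G := Fintype.ofFinite ↥G
  obtain ⟨x, hx⟩ := exists_prime_orderOf_dvd_card (G := ↥G) p (by rwa [← Nat.card_eq_fintype_card])
  set u : GL (Fin 2) (ZMod p) := (x : GL (Fin 2) (ZMod p)) with hu_def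
  have huG : u ∈ G := x.2
  have hord : orderOf u = p :=
    (orderOf_injective G.subtype G.subtype_injective x).trans hx
  set M : M2 p := (u : M2 p) with hM_def
  have hMp : M ^ p = 1 := by
    have h1 : u ^ p = 1 := orderOf_dvd_iff_pow_eq_one.mp (dvd_of_eq hord)
    have := congrArg (Units.val) h1
    rwa [Units.val_pow_eq_pow_val] at this
  have hM1 : M ≠ 1 := by
    intro h
    have : u = 1 := Units.ext h
    rw [this, orderOf_one] at hord
    exact hp.one_lt.ne hord
  set N : M2 p := M - 1 with hN_def
  have hMN : M = N + 1 := by rw [hN_def, sub_add_cancel]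
  haveI : Nonempty (Fin 2) := ⟨0⟩
  have hNp : N ^ p = 0 := by
    rw [hN_def, sub_pow_char_of_commute p (Commute.one_right M), hMp, one_pow, sub_self]
  have hN0 : N ≠ 0 := by
    intro h
    apply hM1
    rw [hMN, h, zero_add]
  have hdetN : N.det = 0 := by
    have h1 : (N.det) ^ p = 0 := by rw [← Matrix.det_pow, hNp, Matrix.det_zero]
    exact pow_eq_zero_iff hp.ne_zero |>.mp h1
  have htr : N.trace = 0 := by
    by_contra htr
    have h2 : N * N = N.trace • N := by
      have h := ch2 N
      rw [hdetN, zero_smul, add_zero, sub_eq_zero] at h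
      exact h
    have hk : ∀ n : ℕ, N ^ (n + 1) = N.trace ^ n • N := by
      intro n
      induction n with
      | zero => simp
      | succ n ih =>
        rw [pow_succ, ih, smul_mul_assoc, h2, pow_succ]
        rw [smul_smul]
    have hp1 : p - 1 + 1 = p := Nat.succ_pred_eq_of_pos hp.pos
    have := hk (p - 1)
    rw [hp1, hNp, ZMod.pow_card_sub_one_eq_one htr, one_smul] at this
    exact hN0 this.symm
  have hNN : N * N = 0 := by
    have h := ch2 N
    rwa [hdetN, htr, zero_smul, zero_smul, sub_zero, add_zero] at h
  -- a vector not killed by N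
  have hexw : ∃ w : Fin 2 → ZMod p, N.mulVec w ≠ 0 := by
    by_contra hall
    push_neg at hall
    apply hN0
    ext i j
    have := congrFun (hall (Pi.single j 1)) i
    simpa [Matrix.mulVec_single] using this
  obtain ⟨w, hw⟩ := hexw
  set v0 : Fin 2 → ZMod p := N.mulVec w with hv0_def
  have hv0 : v0 ≠ 0 := hw
  have hNv0 : N.mulVec v0 = 0 := by
    rw [hv0_def, Matrix.mulVec_mulVec, hNN, Matrix.zero_mulVec]
  -- an element of G moving the line spanned by v0
  have hexg : ∃ g ∈ G, (g : M2 p).mulVec v0 ∉ Submodule.span (ZMod p) {v0} := by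
    by_contra hall
    push_neg at hall
    have hinv : ∀ g ∈ G, ∀ v ∈ Submodule.span (ZMod p) {v0},
        (g : M2 p).mulVec v ∈ Submodule.span (ZMod p) {v0} := by
      intro g hg v hv
      rw [Submodule.mem_span_singleton] at hv
      obtain ⟨t, rfl⟩ := hv
      rw [Matrix.mulVec_smul]
      exact Submodule.smul_mem _ t (hall g hg)
    rcases hirr _ hinv with hbot | htop
    · have hv0mem : v0 ∈ Submodule.span (ZMod p) {v0} :=
        Submodule.mem_span_singleton_self v0
      rw [hbot, Submodule.mem_bot] at hv0mem
      exact hv0 hv0mem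
    · have hwmem : w ∈ Submodule.span (ZMod p) {v0} := by rw [htop]; trivial
      rw [Submodule.mem_span_singleton] at hwmem
      obtain ⟨t, ht⟩ := hwmem
      apply hw
      rw [hv0_def] at hNv0 ⊢
      rw [← ht, Matrix.mulVec_smul, hNv0, smul_zero]
  obtain ⟨g, hgG, hgv⟩ := hexg
  set A : M2 p := (g : M2 p) with hA_def
  set Ai : M2 p := ((g⁻¹ : GL (Fin 2) (ZMod p)) : M2 p) with hAi_def
  have hAAi : A * Ai = 1 := by
    rw [hA_def, hAi_def, ← Units.val_mul, mul_inv_cancel, Units.val_one]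
  have hAiA : Ai * A = 1 := by
    rw [hA_def, hAi_def, ← Units.val_mul, inv_mul_cancel, Units.val_one]
  set w0 : Fin 2 → ZMod p := A.mulVec v0 with hw0_def
  -- the change-of-basis matrix
  set P : M2 p := !![v0 0, w0 0; v0 1, w0 1] with hP_def
  have hdetP : P.det ≠ 0 := by
    intro h
    apply hgv
    rw [Submodule.mem_span_singleton]
    have hcr : v0 0 * w0 1 = v0 1 * w0 0 := by
      rw [Matrix.det_fin_two] at h
      simp only [hP_def] at h
      simp at h
      linear_combination h
    obtain ⟨t, ht⟩ := para v0 w0 hv0 hcr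
    exact ⟨t, ht.symm⟩
  obtain ⟨Q, hQ⟩ := (Matrix.isUnit_iff_isUnit_det P).mpr (Ne.isUnit hdetP)
  set Pi : M2 p := ((Q⁻¹ : GL (Fin 2) (ZMod p)) : M2 p) with hPi_def
  have hPPi : P * Pi = 1 := by
    rw [← hQ, hPi_def, ← Units.val_mul, mul_inv_cancel, Units.val_one]
  have hPiP : Pi * P = 1 := by
    rw [← hQ, hPi_def, ← Units.val_mul, inv_mul_cancel, Units.val_one]
  -- N w0 = c • v0 with c ≠ 0
  have hexc : ∃ c : ZMod p, N.mulVec w0 = c • v0 := by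
    apply para v0 (N.mulVec w0) hv0
    have hc := cross N w w0
    rw [hdetN, zero_mul, sub_eq_zero] at hc
    rw [← hv0_def] at hc
    exact hc
  obtain ⟨c, hcEq⟩ := hexc
  have hc0 : c ≠ 0 := by
    intro h
    rw [h, zero_smul] at hcEq
    have hNP : N * P = 0 := by
      rw [hP_def, colMul, hNv0, hcEq]
      ext i j; fin_cases i <;> fin_cases j <;> simp
    apply hN0
    calc N = N * (P * Pi) := by rw [hPPi, mul_one]
    _ = (N * P) * Pi := (mul_assoc N P Pi).symm
    _ = 0 := by rw [hNP, zero_mul]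
  -- conjugate of u is the upper transvection Tu c
  have hMv0 : M.mulVec v0 = v0 := by
    rw [hMN, Matrix.add_mulVec, hNv0, Matrix.one_mulVec, zero_add]
  have hMw0 : M.mulVec w0 = w0 + c • v0 := by
    rw [hMN, Matrix.add_mulVec, hcEq, Matrix.one_mulVec, add_comm]
  have hMP : M * P = P * Tu c := by
    rw [hP_def, colMul, hMv0, hMw0]
    ext i j; fin_cases i <;> fin_cases j <;>
      simp [Tu, Matrix.mul_apply, Fin.sum_univ_two] <;> ring
  -- conjugate of g u g⁻¹ is the lower transvection Tl d
  set u' : GL (Fin 2) (ZMod p) := g * u * g⁻¹ with hu'_def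
  have hu'G : u' ∈ G := mul_mem (mul_mem hgG huG) (inv_mem hgG)
  set M' : M2 p := (u' : M2 p) with hM'_def
  have hM'val : M' = A * M * Ai := by
    rw [hM'_def, hu'_def, Units.val_mul, Units.val_mul]
  set N' : M2 p := A * N * Ai with hN'_def
  have hM'N' : M' = N' + 1 := by
    rw [hM'val, hMN, hN'_def]
    have : A * (N + 1) * Ai = A * N * Ai + A * Ai := by noncomm_ring
    rw [this, hAAi]
  have hN'w0 : N'.mulVec w0 = 0 := by
    rw [hN'_def, hw0_def, ← Matrix.mulVec_mulVec, ← Matrix.mulVec_mulVec,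
      Matrix.mulVec_mulVec (v := v0) (M := Ai) (N := A), hAiA, Matrix.one_mulVec,
      hNv0, Matrix.mulVec_zero]
  have hexd : ∃ d : ZMod p, N'.mulVec v0 = d • w0 := by
    have hx : ∃ t : ZMod p, N.mulVec (Ai.mulVec v0) = t • v0 := by
      apply para v0 _ hv0
      have hc := cross N w (Ai.mulVec v0)
      rw [hdetN, zero_mul, sub_eq_zero] at hc
      rw [← hv0_def] at hc
      exact hc
    obtain ⟨t, ht⟩ := hx
    refine ⟨t, ?_⟩
    rw [hN'_def, ← Matrix.mulVec_mulVec, ← Matrix.mulVec_mulVec, ht,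
      Matrix.mulVec_smul, hw0_def]
  obtain ⟨d, hdEq⟩ := hexd
  have hN'ne : N' ≠ 0 := by
    intro h
    apply hN0
    have : N = Ai * N' * A := by
      rw [hN'_def]
      calc N = (Ai * A) * N * (Ai * A) := by rw [hAiA, one_mul, mul_one]
      _ = Ai * (A * N * Ai) * A := by noncomm_ring
    rw [this, h, mul_zero, zero_mul]
  have hd0 : d ≠ 0 := by
    intro h
    rw [h, zero_smul] at hdEq
    have hN'P : N' * P = 0 := by
      rw [hP_def, colMul, hdEq, hN'w0]
      ext i j; fin_cases i <;> fin_cases j <;> simp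
    apply hN'ne
    calc N' = N' * (P * Pi) := by rw [hPPi, mul_one]
    _ = (N' * P) * Pi := (mul_assoc N' P Pi).symm
    _ = 0 := by rw [hN'P, zero_mul]
  have hM'v0 : M'.mulVec v0 = v0 + d • w0 := by
    rw [hM'N', Matrix.add_mulVec, hdEq, Matrix.one_mulVec, add_comm]
  have hM'w0 : M'.mulVec w0 = w0 := by
    rw [hM'N', Matrix.add_mulVec, hN'w0, Matrix.one_mulVec, zero_add]
  have hM'P : M' * P = P * Tl d := by
    rw [hP_def, colMul, hM'v0, hM'w0]
    ext i j; fin_cases i <;> fin_cases j <;>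
      simp [Tl, Matrix.mul_apply, Fin.sum_univ_two] <;> ring
  -- the conjugated subgroup K
  set K : Subgroup (GL (Fin 2) (ZMod p)) :=
    Subgroup.map (MulAut.conj Q⁻¹).toMonoidHom G with hK_def
  have hconj : ∀ y : GL (Fin 2) (ZMod p), y ∈ G →
      ∃ k ∈ K, (k : M2 p) = Pi * (y : M2 p) * P := by
    intro y hy
    refine ⟨(MulAut.conj Q⁻¹) y, ?_, ?_⟩
    · rw [hK_def]
      exact Subgroup.mem_map.mpr ⟨y, hy, rfl⟩
    · rw [MulAut.conj_apply, inv_inv, Units.val_mul, Units.val_mul, ← hPi_def, hQ]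
  have hTuK : ∃ k ∈ K, (k : M2 p) = Tu c := by
    obtain ⟨k, hk, e⟩ := hconj u huG
    refine ⟨k, hk, ?_⟩
    rw [e, ← hM_def, mul_assoc, hMP, ← mul_assoc, hPiP, one_mul]
  have hTlK : ∃ k ∈ K, (k : M2 p) = Tl d := by
    obtain ⟨k, hk, e⟩ := hconj u' hu'G
    refine ⟨k, hk, ?_⟩
    rw [e, ← hM'_def, mul_assoc, hM'P, ← mul_assoc, hPiP, one_mul]
  have hu : ∀ a : ZMod p, ∃ k ∈ K, (k : M2 p) = Tu a := allTu K c hc0 hTuK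
  have hl : ∀ a : ZMod p, ∃ k ∈ K, (k : M2 p) = Tl a := allTl K d hd0 hTlK
  -- conclude
  intro s
  have hdets' : (Pi * (s : M2 p) * P).det = 1 := by
    rw [Matrix.det_mul, Matrix.det_mul, s.2]
    calc Pi.det * 1 * P.det = (Pi * P).det := by rw [Matrix.det_mul]; ring
    _ = 1 := by rw [hPiP, Matrix.det_one]
  obtain ⟨k, hk, ek⟩ := gen K hu hl (Pi * (s : M2 p) * P) hdets'
  rw [hK_def, Subgroup.mem_map] at hk
  obtain ⟨y, hyG, hy⟩ := hk
  have hyval : (y : M2 p) = (s : M2 p) := by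
    have h1 : Pi * (y : M2 p) * P = Pi * (s : M2 p) * P := by
      rw [← ek, ← hy]
      simp only [MulEquiv.coe_toMonoidHom, MulAut.conj_apply, inv_inv,
        Units.val_mul]
      rw [← hPi_def, hQ]
    calc (y : M2 p) = (P * Pi) * (y : M2 p) * (P * Pi) := by rw [hPPi, one_mul, mul_one]
    _ = P * (Pi * (y : M2 p) * P) * Pi := by noncomm_ring
    _ = P * (Pi * (s : M2 p) * P) * Pi := by rw [h1]
    _ = (P * Pi) * (s : M2 p) * (P * Pi) := by noncomm_ring
    _ = (s : M2 p) := by rw [hPPi, one_mul, mul_one]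
  have : y = Matrix.SpecialLinearGroup.toGL s := Units.ext hyval
  rw [← this]
  exact hyG
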